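/- arXiv:2406.06014 — 2 statements merged into one kernel-verified Lean document; each statement's English description precedes it below -/
import Mathlib

section
/- Let $Q$ be a $K \times K$ orthogonal matrix, $P$ a permutation matrix, and $S$ a diagonal sign matrix, such that $Q = PQS$ and $\mathbf{1}^\top Q_{\cdot,j} \neq 0$ for every column $j$ of $Q$ (where $\mathbf{1}$ is the all-ones vector). Then $P = I$. -/
open Matrix

theorem stmt_3 (K : ℕ) (Q S : Matrix (Fin K) (Fin K) ℝ) (σ : Equiv.Perm (Fin K))
    (hQorth : Q * Qᵀ = 1)
    (hSdiag : S.IsDiag) (hSsign : ∀ k, S k k = 1 ∨ S k k = -1)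
    (heq : Q = σ.permMatrix ℝ * Q * S)
    (hcols : ∀ j, (∑ i, Q i j) ≠ 0) :
    σ.permMatrix ℝ = 1 := by
  have hentry : ∀ i j, Q i j = Q (σ i) j * S j j := by
    intro i j
    conv_lhs => rw [heq]
    rw [Matrix.mul_apply]
    rw [Finset.sum_eq_single j]
    · rw [Equiv.Perm.permMatrix, PEquiv.toMatrix_toPEquiv_mul, submatrix_apply, id]
    · intro b _ hb
      rw [hSdiag hb, mul_zero]
    · simp
  have hS1 : ∀ j, S j j = 1 := by
    intro j
    have hsum : ∑ i, Q i j = (∑ i, Q i j) * S j j := by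
      calc ∑ i, Q i j = ∑ i, Q (σ i) j * S j j := by
            exact Finset.sum_congr rfl fun i _ => hentry i j
        _ = (∑ i, Q (σ i) j) * S j j := by rw [Finset.sum_mul]
        _ = (∑ i, Q i j) * S j j := by rw [Equiv.sum_comp σ fun i => Q i j]
    rcases hSsign j with h | h
    · exact h
    · exfalso
      rw [h, mul_neg_one] at hsum
      exact hcols j (by linarith [hsum])
  have hSeq : S = 1 := by
    ext i j
    by_cases h : i = j
    · subst h; rw [hS1 i, Matrix.one_apply_eq]
    · rw [hSdiag h, Matrix.one_apply_ne h]
  rw [hSeq, mul_one] at heq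
  calc σ.permMatrix ℝ = σ.permMatrix ℝ * (Q * Qᵀ) := by rw [hQorth, mul_one]
    _ = (σ.permMatrix ℝ * Q) * Qᵀ := by rw [mul_assoc]
    _ = Q * Qᵀ := by rw [← heq]
    _ = 1 := hQorth
end

section
/- Let $B \in [0,1]^{K \times K}$ be a symmetric matrix with eigenvalue decomposition $B = \sum_{k=1}^K \lambda_k q_k q_k^\top$, and suppose $B$ is $(\theta,\eta)$-friendly, i.e., $|\lambda_k - \lambda_\ell| > \eta$ for all $k \neq \ell$ and $|q_k^\top \mathbf{1}| > \theta$ for all $k$, with $\theta, \eta > 0$. Then for any symmetric matrix $B'$, there is at most one permutation matrix $P^*$ satisfying $B' = P^* B P^{*\top}$. -/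
open Matrix

theorem stmt_4 (K : ℕ) (B : Matrix (Fin K) (Fin K) ℝ)
    (hB01 : ∀ i j, B i j ∈ Set.Icc (0:ℝ) 1) (hBsymm : B.IsSymm)
    (lam : Fin K → ℝ) (q : Fin K → Fin K → ℝ)
    (horth : ∀ k l, (q k) ⬝ᵥ (q l) = if k = l then 1 else 0)
    (hEVD : B = ∑ k, lam k • Matrix.vecMulVec (q k) (q k))
    (θ η : ℝ) (hθ : 0 < θ) (hη : 0 < η)
    (hgap : ∀ k l, k ≠ l → η < |lam k - lam l|)
    (hfriend : ∀ k, θ < |∑ i, q k i|)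
    (B' : Matrix (Fin K) (Fin K) ℝ) (hB' : B'.IsSymm)
    (σ₁ σ₂ : Equiv.Perm (Fin K))
    (h₁ : B' = σ₁.permMatrix ℝ * B * (σ₁.permMatrix ℝ)ᵀ)
    (h₂ : B' = σ₂.permMatrix ℝ * B * (σ₂.permMatrix ℝ)ᵀ) :
    σ₁.permMatrix ℝ = σ₂.permMatrix ℝ := by
  suffices hσ : σ₁ = σ₂ by rw [hσ]
  -- entrywise formula for conjugation by a permutation matrix
  have hperm : ∀ (σ : Equiv.Perm (Fin K)) (i j : Fin K),
      (σ.permMatrix ℝ * B * (σ.permMatrix ℝ)ᵀ) i j = B (σ i) (σ j) := by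
    intro σ i j
    simp [Matrix.mul_apply, Equiv.Perm.permMatrix, PEquiv.toMatrix_apply,
      Equiv.toPEquiv, Finset.mul_sum, ite_and]
  have h12 : ∀ i j, B (σ₁ i) (σ₁ j) = B (σ₂ i) (σ₂ j) := by
    intro i j
    have := congrFun (congrFun (h₁.symm.trans h₂) i) j
    rwa [hperm, hperm] at this
  set τ : Equiv.Perm (Fin K) := σ₂ * σ₁⁻¹ with hτ
  have hInv : ∀ i j, B (τ i) (τ j) = B i j := by
    intro i j
    have := h12 (σ₁⁻¹ i) (σ₁⁻¹ j)
    simpa [hτ] using this.symm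
  -- entrywise EVD
  have hBent : ∀ i j, B i j = ∑ l, lam l * (q l i * q l j) := by
    intro i j
    rw [hEVD]
    simp [Matrix.sum_apply, Matrix.vecMulVec_apply, mul_assoc]
  have hBs : ∀ i j, B i j = B j i := by
    intro i j
    rw [hBent, hBent]
    exact Finset.sum_congr rfl fun l _ => by ring
  have horth' : ∀ k l, ∑ i, q k i * q l i = if k = l then 1 else 0 := by
    intro k l; simpa [dotProduct] using horth k l
  -- eigenvector equation
  have hA : ∀ k i, ∑ j, B i j * q k j = lam k * q k i := by
    intro k i
    have h1 : ∑ j, B i j * q k j = ∑ l, lam l * q l i * (∑ j, q l j * q k j) := by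
      simp_rw [hBent, Finset.sum_mul, Finset.mul_sum]
      rw [Finset.sum_comm]
      exact Finset.sum_congr rfl fun l _ => Finset.sum_congr rfl fun j _ => by ring
    rw [h1]
    simp [horth', mul_ite]
  -- spanning: Qᵀ Q = 1
  have hspan : ∀ i j, ∑ k, q k i * q k j = if i = j then 1 else 0 := by
    set Q : Matrix (Fin K) (Fin K) ℝ := Matrix.of q with hQ
    have hQQT : Q * Qᵀ = 1 := by
      ext k l
      simpa [Matrix.mul_apply, hQ, Matrix.one_apply] using horth' k l
    have hQTQ : Qᵀ * Q = 1 := mul_eq_one_comm.mp hQQT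
    intro i j
    have := congrFun (congrFun hQTQ i) j
    simpa [Matrix.mul_apply, hQ, Matrix.one_apply] using this
  -- permuted eigenvector equation
  have hW : ∀ k i, ∑ j, B i j * q k (τ⁻¹ j) = lam k * q k (τ⁻¹ i) := by
    intro k i
    have h1 : ∑ j, B i j * q k (τ⁻¹ j) = ∑ j, B i (τ j) * q k j := by
      rw [← Equiv.sum_comp τ (fun j => B i j * q k (τ⁻¹ j))]
      simp
    have h2 : ∀ j, B i (τ j) = B (τ⁻¹ i) j := by
      intro j
      have := hInv (τ⁻¹ i) j
      simpa using this
    rw [h1]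
    simp_rw [h2]
    exact hA k (τ⁻¹ i)
  -- cross coefficients vanish
  have hc : ∀ k l, l ≠ k → ∑ i, q l i * q k (τ⁻¹ i) = 0 := by
    intro k l hlk
    have key : lam l * (∑ i, q l i * q k (τ⁻¹ i)) = lam k * (∑ i, q l i * q k (τ⁻¹ i)) := by
      calc lam l * (∑ i, q l i * q k (τ⁻¹ i))
          = ∑ i, (lam l * q l i) * q k (τ⁻¹ i) := by
            rw [Finset.mul_sum]; exact Finset.sum_congr rfl fun i _ => by ring
        _ = ∑ i, (∑ j, B i j * q l j) * q k (τ⁻¹ i) := by simp_rw [hA]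
        _ = ∑ j, q l j * (∑ i, B j i * q k (τ⁻¹ i)) := by
            simp_rw [Finset.sum_mul, Finset.mul_sum]
            rw [Finset.sum_comm]
            exact Finset.sum_congr rfl fun j _ => Finset.sum_congr rfl fun i _ => by
              rw [hBs i j]; ring
        _ = ∑ j, q l j * (lam k * q k (τ⁻¹ j)) := by simp_rw [hW]
        _ = lam k * (∑ j, q l j * q k (τ⁻¹ j)) := by
            rw [Finset.mul_sum]; exact Finset.sum_congr rfl fun j _ => by ring
    have hlamne : lam l ≠ lam k := by
      intro h
      have := hgap l k hlk
      rw [h, sub_self, abs_zero] at this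
      linarith
    have : (lam l - lam k) * (∑ i, q l i * q k (τ⁻¹ i)) = 0 := by linarith [key]
    rcases mul_eq_zero.mp this with h | h
    · exact absurd (sub_eq_zero.mp h) hlamne
    · exact h
  -- q k ∘ τ⁻¹ = s k • q k
  have hsk : ∀ k i, q k (τ⁻¹ i) = (∑ m, q k m * q k (τ⁻¹ m)) * q k i := by
    intro k i
    have h1 : q k (τ⁻¹ i) = ∑ j, (if i = j then (1:ℝ) else 0) * q k (τ⁻¹ j) := by
      simp
    rw [h1]
    simp_rw [← hspan]
    calc ∑ j, (∑ l, q l i * q l j) * q k (τ⁻¹ j)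
        = ∑ l, q l i * (∑ j, q l j * q k (τ⁻¹ j)) := by
          simp_rw [Finset.sum_mul, Finset.mul_sum]
          rw [Finset.sum_comm]
          exact Finset.sum_congr rfl fun l _ => Finset.sum_congr rfl fun j _ => by ring
      _ = q k i * (∑ j, q k j * q k (τ⁻¹ j)) := by
          rw [Finset.sum_eq_single k]
          · intro l _ hlk
            rw [hc k l hlk, mul_zero]
          · intro h; exact absurd (Finset.mem_univ k) h
      _ = (∑ m, q k m * q k (τ⁻¹ m)) * q k i := by ring
  -- the sign is +1
  have hfix : ∀ k i, q k (τ⁻¹ i) = q k i := by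
    intro k i
    have hsum : ∑ i, q k (τ⁻¹ i) = ∑ i, q k i := Equiv.sum_comp τ⁻¹ (q k)
    have hsum2 : ∑ i, q k (τ⁻¹ i) = (∑ m, q k m * q k (τ⁻¹ m)) * ∑ i, q k i := by
      rw [Finset.mul_sum]
      exact Finset.sum_congr rfl fun i _ => hsk k i
    have hne : (∑ i, q k i) ≠ 0 := by
      intro h
      have := hfriend k
      rw [h, abs_zero] at this
      linarith
    have hs1 : (∑ m, q k m * q k (τ⁻¹ m)) = 1 := by
      have h : (∑ m, q k m * q k (τ⁻¹ m)) * (∑ i, q k i) = 1 * (∑ i, q k i) := by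
        rw [one_mul]; exact hsum2.symm.trans hsum
      exact mul_right_cancel₀ hne h
    rw [hsk k i, hs1, one_mul]
  -- τ = id
  have hτid : ∀ i, τ⁻¹ i = i := by
    intro i
    have h1 : ∑ k, q k (τ⁻¹ i) * q k i = (if τ⁻¹ i = i then (1:ℝ) else 0) := hspan (τ⁻¹ i) i
    simp_rw [hfix] at h1
    rw [hspan i i] at h1
    simp at h1
    by_contra hne
    exact hne h1
  ext i
  have := hτid (σ₂ i)
  simp [hτ] at this
  rw [← this]
end
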